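/- Let Y_1,…,Y_n be i.i.d. standard normal random variables and δ, q > 0. Then P(n·(Ȳ − δ)²/2 ≥ q) ≥ 1 − exp(−(√n·δ − √(2q))₊²/8), where x₊ = max(x,0). -/

import Mathlib

open MeasureTheory ProbabilityTheory Real
open scoped NNReal ENNReal

lemma gauss_pdf_mul_exp (t x : ℝ) :
    gaussianPDFReal 0 1 x * Real.exp (t * x)
      = Real.exp (t ^ 2 / 2) * gaussianPDFReal t 1 x := by
  simp only [gaussianPDFReal, NNReal.coe_one, mul_one, sub_zero]
  rw [mul_assoc, ← Real.exp_add, ← mul_assoc, mul_comm (Real.exp (t ^ 2 / 2)), mul_assoc,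
    ← Real.exp_add]
  congr 2
  ring

lemma integrable_exp_mul_gaussianReal (t : ℝ) :
    Integrable (fun x => Real.exp (t * x)) (gaussianReal 0 1) := by
  rw [gaussianReal_of_var_ne_zero 0 one_ne_zero]
  have hd : gaussianPDF 0 1 = fun x => ((Real.toNNReal (gaussianPDFReal 0 1 x) : ℝ≥0) : ℝ≥0∞) :=
    rfl
  rw [hd, integrable_withDensity_iff_integrable_coe_smul
    ((measurable_gaussianPDFReal 0 1).real_toNNReal)]
  have : (fun x => ((Real.toNNReal (gaussianPDFReal 0 1 x) : ℝ≥0) : ℝ) • Real.exp (t * x))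
      = fun x => Real.exp (t ^ 2 / 2) * gaussianPDFReal t 1 x := by
    ext x
    rw [smul_eq_mul, Real.coe_toNNReal _ (gaussianPDFReal_nonneg 0 1 x), gauss_pdf_mul_exp]
  rw [this]
  exact (integrable_gaussianPDFReal t 1).const_mul _

lemma integral_exp_mul_gaussianReal (t : ℝ) :
    ∫ x, Real.exp (t * x) ∂(gaussianReal 0 1) = Real.exp (t ^ 2 / 2) := by
  rw [gaussianReal_of_var_ne_zero 0 one_ne_zero]
  have hd : gaussianPDF 0 1 = fun x => ((Real.toNNReal (gaussianPDFReal 0 1 x) : ℝ≥0) : ℝ≥0∞) :=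
    rfl
  rw [hd, integral_withDensity_eq_integral_smul
    ((measurable_gaussianPDFReal 0 1).real_toNNReal)]
  have : (fun x => (Real.toNNReal (gaussianPDFReal 0 1 x) : ℝ≥0) • Real.exp (t * x))
      = fun x => Real.exp (t ^ 2 / 2) * gaussianPDFReal t 1 x := by
    ext x
    rw [NNReal.smul_def, smul_eq_mul,
      Real.coe_toNNReal _ (gaussianPDFReal_nonneg 0 1 x), gauss_pdf_mul_exp]
  rw [this, integral_const_mul, integral_gaussianPDFReal_eq_one t one_ne_zero, mul_one]

theorem gaussian_power_estimate
    {Ω : Type*} [MeasureSpace Ω] [IsProbabilityMeasure (ℙ : Measure Ω)]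
    (n : ℕ) (hn : 0 < n) (δ q : ℝ) (hδ : 0 < δ) (hq : 0 < q)
    (Y : Fin n → Ω → ℝ) (hmeas : ∀ i, Measurable (Y i))
    (hindep : iIndepFun Y ℙ)
    (hgauss : ∀ i, Measure.map (Y i) ℙ = gaussianReal 0 1) :
    1 - Real.exp (-(max (Real.sqrt n * δ - Real.sqrt (2 * q)) 0) ^ 2 / 8)
      ≤ (ℙ {ω | q ≤ (n : ℝ) * ((∑ i, Y i ω) / n - δ) ^ 2 / 2}).toReal := by
  have hn' : (0 : ℝ) < n := Nat.cast_pos.mpr hn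
  set a : ℝ := Real.sqrt n * δ - Real.sqrt (2 * q) with ha
  set E : Set Ω := {ω | q ≤ (n : ℝ) * ((∑ i, Y i ω) / n - δ) ^ 2 / 2} with hE
  have hSmeas : Measurable fun ω => ∑ i, Y i ω := Finset.measurable_sum _ fun i _ => hmeas i
  have hEmeas : MeasurableSet E := by
    have : Measurable fun ω => (n : ℝ) * ((∑ i, Y i ω) / n - δ) ^ 2 / 2 :=
      ((((hSmeas.div_const _).sub_const _).pow_const 2).const_mul _).div_const _
    exact measurableSet_le measurable_const this
  by_cases hle : a ≤ 0
  · rw [max_eq_right hle]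
    simp only [ne_eq, OfNat.ofNat_ne_zero, not_false_eq_true, zero_pow, neg_zero, zero_div,
      Real.exp_zero, sub_self]
    exact ENNReal.toReal_nonneg
  push_neg at hle
  rw [max_eq_left hle.le]
  have hun : Real.sqrt n * Real.sqrt n = n := Real.mul_self_sqrt hn'.le
  have hu : (0 : ℝ) < Real.sqrt n := Real.sqrt_pos.mpr hn'
  have hv : (0 : ℝ) ≤ Real.sqrt (2 * q) := Real.sqrt_nonneg _
  have hv2 : Real.sqrt (2 * q) * Real.sqrt (2 * q) = 2 * q :=
    Real.mul_self_sqrt (by positivity)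
  set t : ℝ := a / Real.sqrt n with hta
  have ht : 0 < t := div_pos hle hu
  set c : ℝ := Real.sqrt n * a with hc
  -- subset of complement
  have hsub : Eᶜ ⊆ {ω | c ≤ (∑ i, Y i) ω} := by
    intro ω hω
    simp only [hE, Set.mem_compl_iff, Set.mem_setOf_eq, not_le] at hω
    simp only [Set.mem_setOf_eq, Finset.sum_apply]
    set s : ℝ := ∑ i, Y i ω with hs
    have h1 : (s / n - δ) ^ 2 < 2 * q / n := by
      rw [lt_div_iff₀ hn']
      nlinarith
    have h2 : δ - s / n ≤ |s / n - δ| := by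
      rw [abs_sub_comm]; exact le_abs_self _
    have h3 : |s / n - δ| < Real.sqrt (2 * q) / Real.sqrt n := by
      rw [← Real.sqrt_sq_eq_abs, ← Real.sqrt_div (by positivity : (0:ℝ) ≤ 2 * q) n]
      exact Real.sqrt_lt_sqrt (sq_nonneg _) h1
    have h4 : δ - s / n < Real.sqrt (2 * q) / Real.sqrt n := lt_of_le_of_lt h2 h3
    rw [hc, ha]
    have h5 : (δ - s / n) * n < Real.sqrt (2 * q) / Real.sqrt n * n :=
      mul_lt_mul_of_pos_right h4 hn'
    have h6 : (δ - s / n) * n = δ * n - s := by field_simp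
    have h7 : Real.sqrt (2 * q) / Real.sqrt n * n = Real.sqrt (2 * q) * Real.sqrt n := by
      field_simp; rw [sq, hun]
    nlinarith [hun]
  -- mgf of each Y i
  have hmgf : ∀ i : Fin n, mgf (Y i) ℙ t = Real.exp (t ^ 2 / 2) := by
    intro i
    have hmb : AEStronglyMeasurable (fun x : ℝ => Real.exp (t * x)) (Measure.map (Y i) ℙ) :=
      ((measurable_id.const_mul t).exp).aestronglyMeasurable
    rw [mgf, ← integral_map (hmeas i).aemeasurable hmb, hgauss i,
      integral_exp_mul_gaussianReal]
  have hint : ∀ i : Fin n, Integrable (fun ω => Real.exp (t * Y i ω)) ℙ := by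
    intro i
    have h := _root_.integrable_exp_mul_gaussianReal t
    rw [← hgauss i] at h
    exact (integrable_map_measure ((measurable_id.const_mul t).exp).aestronglyMeasurable
      (hmeas i).aemeasurable).mp h
  have hintS : Integrable (fun ω => Real.exp (t * (∑ i, Y i) ω)) ℙ :=
    hindep.integrable_exp_mul_sum hmeas fun i _ => hint i
  have hchern := measure_ge_le_exp_mul_mgf (μ := ℙ) (X := ∑ i, Y i) c ht.le hintS
  rw [hindep.mgf_sum hmeas] at hchern
  have hprod : ∏ i : Fin n, mgf (Y i) ℙ t = Real.exp ((n : ℝ) * (t ^ 2 / 2)) := by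
    rw [Finset.prod_congr rfl fun i _ => hmgf i, Finset.prod_const, Finset.card_univ,
      Fintype.card_fin, ← Real.exp_nat_mul]
  rw [hprod, ← Real.exp_add] at hchern
  have hexp : -t * c + (n : ℝ) * (t ^ 2 / 2) = -a ^ 2 / 2 := by
    have hune : Real.sqrt (n : ℝ) ≠ 0 := ne_of_gt hu
    rw [hta, hc]
    field_simp
    nlinarith [hun]
  rw [hexp] at hchern
  -- complement bound
  have hcompl : (ℙ Eᶜ).toReal ≤ Real.exp (-a ^ 2 / 2) := by
    refine le_trans ?_ hchern
    exact ENNReal.toReal_mono (measure_ne_top _ _) (measure_mono hsub)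
  have hEc : (ℙ Eᶜ).toReal = 1 - (ℙ E).toReal := by
    rw [prob_compl_eq_one_sub hEmeas, ENNReal.toReal_sub_of_le prob_le_one ENNReal.one_ne_top,
      ENNReal.toReal_one]
  have hmono : Real.exp (-a ^ 2 / 2) ≤ Real.exp (-a ^ 2 / 8) := by
    apply Real.exp_le_exp.mpr
    nlinarith [sq_nonneg a]
  linarith [hcompl, hEc.symm ▸ hcompl, hmono]
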